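/- Let q be an odd prime power with q ≡ 3 (mod 4), let g be a primitive element of GF(q), and let χ be the extended quadratic character. Define length-(q-1)/2 binary sequences a, b by a_0 = 1, a_k = χ(g^{2k} - 1) for 0 < k < (q-1)/2, and b_k = χ(g^{2k+1} - 1) for 0 ≤ k < (q-1)/2. Then (a,b) is a binary Legendre pair: R_a(u) + R_b(u) = -2 for all u ≢ 0 mod (q-1)/2. -/

import Mathlib

open Finset

private lemma qc_shift_sum (F : Type*) [Field F] [Fintype F] [DecidableEq F]
    (hF2 : ringChar F ≠ 2) {d : F} (hd : d ≠ 0) :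
    ∑ x : F, (quadraticChar F) x * (quadraticChar F) (x + d) = -1 := by
  classical
  have h0 : (quadraticChar F) (0 : F) * (quadraticChar F) ((0 : F) + d) = 0 := by
    simp [quadraticChar_zero]
  have hsplit : ∑ x : F, (quadraticChar F) x * (quadraticChar F) (x + d)
      = (quadraticChar F) (0 : F) * (quadraticChar F) ((0 : F) + d)
        + ∑ x ∈ univ.erase (0 : F), (quadraticChar F) x * (quadraticChar F) (x + d) :=
    (Finset.add_sum_erase univ
      (fun x : F => (quadraticChar F) x * (quadraticChar F) (x + d)) (mem_univ (0 : F))).symm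
  rw [hsplit, h0, zero_add]
  have hstep : ∑ x ∈ univ.erase (0 : F),
      (quadraticChar F) x * (quadraticChar F) (x + d)
      = ∑ y ∈ univ.erase (1 : F), (quadraticChar F) y := by
    refine Finset.sum_nbij' (fun x => 1 + d * x⁻¹) (fun y => d * (y - 1)⁻¹) ?_ ?_ ?_ ?_ ?_
    · intro x hx
      have hx0 : x ≠ 0 := by simpa using (Finset.mem_erase.mp hx).1
      have : d * x⁻¹ ≠ 0 := mul_ne_zero hd (inv_ne_zero hx0)
      simp only [mem_erase, mem_univ, and_true]
      intro h
      exact this (by linear_combination h)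
    · intro y hy
      have hy1 : y ≠ 1 := by simpa using (Finset.mem_erase.mp hy).1
      have : y - 1 ≠ 0 := sub_ne_zero.mpr hy1
      simp only [mem_erase, mem_univ, and_true]
      exact mul_ne_zero hd (inv_ne_zero this)
    · intro x hx
      have hx0 : x ≠ 0 := by simpa using (Finset.mem_erase.mp hx).1
      field_simp
      simp [hd]
    · intro y hy
      have hy1 : y ≠ 1 := by simpa using (Finset.mem_erase.mp hy).1
      have : y - 1 ≠ 0 := sub_ne_zero.mpr hy1
      field_simp
      ring
    · intro x hx
      have hx0 : x ≠ 0 := by simpa using (Finset.mem_erase.mp hx).1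
      have hxx : (quadraticChar F) x⁻¹ = (quadraticChar F) x := by
        have h1 : (quadraticChar F) x⁻¹ * (quadraticChar F) x = 1 := by
          rw [← map_mul, inv_mul_cancel₀ hx0, map_one]
        have h2 := quadraticChar_sq_one hx0
        have hx1 : (quadraticChar F) x ≠ 0 := by
          rw [Ne, quadraticChar_eq_zero_iff]; exact hx0
        have h3 : (quadraticChar F) x⁻¹ * (quadraticChar F) x
            = (quadraticChar F) x * (quadraticChar F) x := by
          rw [h1, ← pow_two, h2]
        exact mul_right_cancel₀ hx1 h3
      calc (quadraticChar F) x * (quadraticChar F) (x + d)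
          = (quadraticChar F) x⁻¹ * (quadraticChar F) (x + d) := by rw [hxx]
        _ = (quadraticChar F) (x⁻¹ * (x + d)) := (map_mul _ _ _).symm
        _ = (quadraticChar F) (1 + d * x⁻¹) := by
            congr 1; field_simp
  rw [hstep]
  have h2 : (quadraticChar F) (1 : F) + ∑ y ∈ univ.erase (1 : F), (quadraticChar F) y
      = ∑ y : F, (quadraticChar F) y :=
    Finset.add_sum_erase univ (fun y : F => (quadraticChar F) y) (mem_univ (1 : F))
  have hzero := quadraticChar_sum_zero hF2
  have h1 : (quadraticChar F) (1 : F) = 1 := map_one _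
  linarith

private lemma sum_range_double (h : ℕ → ℤ) (n : ℕ) :
    ∑ j ∈ Finset.range (2 * n), h j = ∑ i ∈ Finset.range n, (h (2 * i) + h (2 * i + 1)) := by
  induction n with
  | zero => simp
  | succ n ih =>
      have : 2 * (n + 1) = (2 * n + 1) + 1 := by ring
      rw [this, Finset.sum_range_succ, Finset.sum_range_succ, ih, Finset.sum_range_succ]
      ring

open Finset in
/-- First construction (Theorem 1(i), Szekeres): for an odd prime power `q ≡ 3 (mod 4)`,
with `g` a primitive element of `GF(q)` and `χ` the extended quadratic character, the
length-`(q-1)/2` binary sequences `a` (with `a_0 = 1`, `a_k = χ(g^{2k}-1)` otherwise)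
and `b` (with `b_k = χ(g^{2k+1}-1)`) form a binary Legendre pair. -/
theorem first_construction_q3mod4 (F : Type*) [Field F] [Fintype F] [DecidableEq F]
    (N : ℕ) [NeZero N] (hcard : Fintype.card F = 2 * N + 1)
    (hq4 : Fintype.card F % 4 = 3)
    (g : F) (hg : orderOf g = Fintype.card F - 1)
    (χ : F → ℤ)
    (hχ : ∀ α : F, χ α = if α = 0 then 0 else if IsSquare α then 1 else -1)
    (a b : ZMod N → ℤ)
    (ha0 : a 0 = 1)
    (ha : ∀ k : ZMod N, k ≠ 0 → a k = χ (g ^ (2 * k.val) - 1))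
    (hb : ∀ k : ZMod N, b k = χ (g ^ (2 * k.val + 1) - 1)) :
    ∀ u : ZMod N, u ≠ 0 →
      (∑ k : ZMod N, a k * a (k + u)) + ∑ k : ZMod N, b k * b (k + u) = -2 := by
  classical
  intro u hu
  have hN : 0 < N := Nat.pos_of_ne_zero (NeZero.ne N)
  have hχq : ∀ α : F, χ α = quadraticChar F α := by
    intro α; rw [hχ, quadraticChar_apply, quadraticCharFun]
  have hF2 : ringChar F ≠ 2 := by
    intro h
    have := FiniteField.even_card_of_char_two h
    omega
  have horder : orderOf g = 2 * N := by rw [hg, hcard]; omega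
  have hpow1 : g ^ (2 * N) = 1 := by rw [← horder]; exact pow_orderOf_eq_one g
  have hg0 : g ≠ 0 := by
    intro h
    rw [h, zero_pow (by omega)] at hpow1
    exact zero_ne_one hpow1
  have hmod : ∀ m : ℕ, g ^ (2 * (m % N)) = g ^ (2 * m) := by
    intro m
    have h2 : 2 * m = 2 * (m % N) + 2 * N * (m / N) := by
      conv_lhs => rw [← Nat.mod_add_div m N]
      ring
    have h3 : g ^ (2 * N * (m / N)) = 1 := by rw [pow_mul, hpow1, one_pow]
    rw [h2, pow_add, h3, mul_one]
  -- basic facts about u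
  have huval : u.val < N := ZMod.val_lt u
  have huval0 : u.val ≠ 0 := fun h => hu ((ZMod.val_eq_zero u).mp h)
  set c : F := g ^ (2 * u.val) with hc
  have hc0 : c ≠ 0 := pow_ne_zero _ hg0
  have hcsq : IsSquare c := ⟨g ^ u.val, by rw [hc, two_mul, pow_add]⟩
  have hχc : (quadraticChar F) c = 1 := (quadraticChar_one_iff_isSquare hc0).mpr hcsq
  have hc1 : c ≠ 1 := by
    intro h
    have hd : orderOf g ∣ 2 * u.val := orderOf_dvd_of_pow_eq_one h
    rw [horder] at hd
    have : N ∣ u.val := by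
      rcases hd with ⟨t, ht⟩
      refine ⟨t, ?_⟩
      have h2 : 2 * u.val = 2 * (N * t) := by rw [ht]; ring
      omega
    have := Nat.le_of_dvd (Nat.pos_of_ne_zero huval0) this
    omega
  have hm1 : (quadraticChar F) (-1 : F) = -1 := by
    rw [quadraticChar_apply, quadraticCharFun]
    rw [if_neg (by simp), if_neg]
    rw [FiniteField.isSquare_neg_one_iff]
    simp [hq4]
  -- value at -u
  have hvneg : (-u).val = N - u.val := by rw [ZMod.neg_val, if_neg hu]
  set e : F := g ^ (2 * (-u).val) with he
  have hec : e * c = 1 := by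
    rw [he, hc, ← pow_add]
    have : 2 * (-u).val + 2 * u.val = 2 * N := by omega
    rw [this, hpow1]
  have he0 : e ≠ 0 := pow_ne_zero _ hg0
  have hesq : IsSquare e := ⟨g ^ (-u).val, by rw [he, two_mul, pow_add]⟩
  have hχe : (quadraticChar F) e = 1 := (quadraticChar_one_iff_isSquare he0).mpr hesq
  have hkey : χ (e - 1) = - χ (c - 1) := by
    have heq : e - 1 = (-1) * (e * (c - 1)) := by
      linear_combination hec
    rw [hχq, hχq, heq, map_mul, map_mul, hm1, hχe]
    ring
  -- the shift lemma
  have hshift : ∀ k : ZMod N, g ^ (2 * (k + u).val) = g ^ (2 * k.val) * c := by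
    intro k
    rw [ZMod.val_add, hmod, mul_add, pow_add, hc]
  set f : F → ℤ := fun x => χ (x - 1) * χ (c * x - 1) with hf
  -- the b-sum
  have hbsum : ∑ k : ZMod N, b k * b (k + u) = ∑ k : ZMod N, f (g ^ (2 * k.val + 1)) := by
    refine Finset.sum_congr rfl fun k _ => ?_
    rw [hb, hb]
    simp only [hf]
    have h2 : g ^ (2 * (k + u).val + 1) = c * g ^ (2 * k.val + 1) := by
      rw [pow_succ, pow_succ, hshift]; ring
    rw [h2]
  -- the a-sum, with correction terms
  have h0u : (0 : ZMod N) ≠ -u := by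
    intro h; exact hu (by simpa using h.symm)
  have haterm : ∀ k : ZMod N, a k * a (k + u)
      = f (g ^ (2 * k.val)) + ((if k = 0 then χ (c - 1) else 0)
        + (if k = -u then χ (e - 1) else 0)) := by
    intro k
    by_cases hk0 : k = 0
    · subst hk0
      have h1 : g ^ (2 * (0 : ZMod N).val) = 1 := by
        simp [ZMod.val_zero]
      have h2 : χ ((1 : F) - 1) = 0 := by rw [sub_self, hχ]; simp
      simp only [hf, if_pos rfl, if_neg h0u, h1, ha0, zero_add, ha u hu, h2]
      simp [hc]
    · by_cases hku : k = -u
      · subst hku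
        have h2 : χ (c * e - 1) = 0 := by
          rw [mul_comm, hec, sub_self, hχ]; simp
        rw [if_neg (by simpa using h0u.symm), if_pos rfl, neg_add_cancel, ha0, mul_one,
          ha (-u) (neg_ne_zero.mpr hu)]
        simp only [hf, ← he, h2]
        ring
      · have hku' : k + u ≠ 0 := by
          intro h
          exact hku (by linear_combination h)
        rw [if_neg hk0, if_neg hku, ha k hk0, ha (k + u) hku']
        simp only [hf, hshift]
        have h3 : χ (g ^ (2 * k.val) * c - 1) = χ (c * g ^ (2 * k.val) - 1) := by
          rw [mul_comm]
        rw [h3]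
        ring
  have hasum : ∑ k : ZMod N, a k * a (k + u)
      = (∑ k : ZMod N, f (g ^ (2 * k.val))) + (χ (c - 1) + χ (e - 1)) := by
    rw [Finset.sum_congr rfl fun k _ => haterm k, Finset.sum_add_distrib,
      Finset.sum_add_distrib, Finset.sum_ite_eq' univ (0 : ZMod N) (fun _ => χ (c - 1)),
      Finset.sum_ite_eq' univ (-u : ZMod N) (fun _ => χ (e - 1))]
    simp
  -- combine the two sums into a sum over F \ {0}
  have hval_sum : ∀ G : ℕ → ℤ, ∑ k : ZMod N, G k.val = ∑ i ∈ Finset.range N, G i := by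
    intro G
    refine Finset.sum_nbij' (fun k : ZMod N => k.val) (fun i => (i : ZMod N)) ?_ ?_ ?_ ?_ ?_
    · intro k _; exact Finset.mem_range.mpr (ZMod.val_lt k)
    · intro i _; exact mem_univ _
    · intro k _; simp [ZMod.natCast_val, ZMod.cast_id]
    · intro i hi; exact ZMod.val_cast_of_lt (Finset.mem_range.mp hi)
    · intro k _; rfl
  have hcombine : (∑ k : ZMod N, f (g ^ (2 * k.val))) + ∑ k : ZMod N, f (g ^ (2 * k.val + 1))
      = ∑ x ∈ univ.erase (0 : F), f x := by
    rw [hval_sum (fun i => f (g ^ (2 * i))), hval_sum (fun i => f (g ^ (2 * i + 1))),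
      ← Finset.sum_add_distrib, ← sum_range_double (fun j => f (g ^ j)) N]
    have hinj : ∀ x ∈ Finset.range (2 * N), ∀ y ∈ Finset.range (2 * N),
        g ^ x = g ^ y → x = y := by
      intro x hx y hy hxy
      exact pow_injOn_Iio_orderOf (by rw [horder]; exact Finset.mem_range.mp hx)
        (by rw [horder]; exact Finset.mem_range.mp hy) hxy
    rw [← Finset.sum_image hinj]
    congr 1
    apply Finset.eq_of_subset_of_card_le
    · intro x hx
      rcases Finset.mem_image.mp hx with ⟨j, _, rfl⟩
      exact Finset.mem_erase.mpr ⟨pow_ne_zero _ hg0, mem_univ _⟩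
    · rw [Finset.card_image_of_injOn (fun x hx y hy => hinj x hx y hy),
        Finset.card_range, Finset.card_erase_of_mem (mem_univ _), Finset.card_univ, hcard]
      omega
  -- evaluate the full character sum
  have hd : (1 : F) - c⁻¹ ≠ 0 := by
    intro h
    have : c⁻¹ = 1 := by linear_combination -h
    exact hc1 (by rw [← inv_inv c, this, inv_one])
  have hmain : ∑ x : F, f x = -1 := by
    have hfe : ∀ x : F, f x = (quadraticChar F) (x - 1) * (quadraticChar F) ((x - 1) + (1 - c⁻¹)) := by
      intro x
      simp only [hf, hχq]
      congr 1
      have : c * x - 1 = c * ((x - 1) + (1 - c⁻¹)) := by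
        field_simp
        ring
      rw [this, map_mul, hχc, one_mul]
    calc ∑ x : F, f x
        = ∑ x : F, (quadraticChar F) (x - 1) * (quadraticChar F) ((x - 1) + (1 - c⁻¹)) :=
          Finset.sum_congr rfl fun x _ => hfe x
      _ = ∑ y : F, (quadraticChar F) y * (quadraticChar F) (y + (1 - c⁻¹)) := by
          exact Fintype.sum_equiv (Equiv.subRight (1 : F)) _ _ (fun x => rfl)
      _ = -1 := qc_shift_sum F hF2 hd
  have hf0 : f 0 = 1 := by
    simp only [hf, mul_zero, zero_sub, hχq, hm1]
    norm_num
  rw [hasum, hbsum, hkey]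
  have : (∑ k : ZMod N, f (g ^ (2 * k.val))) + ∑ k : ZMod N, f (g ^ (2 * k.val + 1)) = -2 := by
    rw [hcombine, Finset.sum_erase_eq_sub (mem_univ (0 : F)), hmain, hf0]
    ring
  linarith [this]
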